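/- Let M be a compact oriented manifold of dimension n+k carrying a locally free action of a connected abelian group H with dim h = k, and let W ⊂ Ω¹(M)^H with basis w₁,…,w_k satisfy dW ⊂ Ω²_B(M) and non-degenerate pairing with h. Then wedging with w₁∧⋯∧w_k induces an isomorphism H^n_B(M) ≅ H^{n+k}(M). In particular, if M is compact and oriented, the foliation by H-orbits is homologically oriented (H^n_B(M) ≠ 0). -/

import Mathlib

/-- Let `M` be a compact oriented manifold of dimension `n + k` with
a locally free action of a connected abelian group `H`, `dim h = k`, and let
`W ⊆ Ω¹(M)^H` with basis `w₁, …, w_k` satisfy `dW ⊆ Ω²_B(M)` and non-degenerate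
pairing with `h`.  Then wedging with `w₁ ∧ ⋯ ∧ w_k` induces an isomorphism
`H^n_B(M) ≅ H^{n+k}(M)`; in particular the foliation by `H`-orbits is homologically
oriented (`H^n_B(M) ≠ 0`).

The de Rham algebra is abstracted as in the Cartan-calculus setting; compactness of
the closure of `H` enters through the hypothesis that the inclusion of invariant
forms is a quasi-isomorphism (averaging), and orientability through the
non-vanishing of the top de Rham cohomology. -/
theorem stmt_9
    (n k : ℕ)
    {A : Type*} [Ring A] [Algebra ℝ A]
    (𝒜 : ℕ → Submodule ℝ A) [GradedRing 𝒜]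
    (d : A →ₗ[ℝ] A) (hd2 : d ∘ₗ d = 0)
    (hddeg : ∀ m : ℕ, ∀ a ∈ 𝒜 m, d a ∈ 𝒜 (m + 1))
    -- `dim M = n + k`
    (htop : ∀ j : ℕ, n + k < j → 𝒜 j = ⊥)
    {hh : Type*} [AddCommGroup hh] [Module ℝ hh]
    (b : Module.Basis (Fin k) ℝ hh)
    (ι L : hh →ₗ[ℝ] Module.End ℝ A)
    -- Cartan calculus
    (hι2 : ∀ v, ι v ∘ₗ ι v = 0)
    (hιL : ∀ v u : hh, ι v ∘ₗ L u = L u ∘ₗ ι v)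
    (hcartan : ∀ v, L v = d ∘ₗ ι v + ι v ∘ₗ d)
    (hιdeg : ∀ (v : hh) (m : ℕ), ∀ a ∈ 𝒜 (m + 1), ι v a ∈ 𝒜 m)
    (hιder : ∀ (v : hh) (m : ℕ), ∀ a ∈ 𝒜 m, ∀ x : A,
      ι v (a * x) = ι v a * x + ((-1 : ℝ) ^ m) • (a * ι v x))
    (hLder : ∀ (v : hh) (a x : A), L v (a * x) = L v a * x + a * L v x)
    -- the basis `w₁, …, w_k` of `W ⊆ Ω¹(M)^H`
    (w : Fin k → A) (hwdeg : ∀ i, w i ∈ 𝒜 1)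
    (hwinv : ∀ (i : Fin k) (v : hh), L v (w i) = 0)
    (hdw : ∀ (i : Fin k) (v : hh), ι v (d (w i)) = 0 ∧ L v (d (w i)) = 0)
    (hdwdeg : ∀ i, d (w i) ∈ 𝒜 2)
    -- the pairing is non-degenerate : `w` is dual to the basis `b` of `h`
    (hpair : ∀ i j : Fin k, ι (b i) (w j) = if i = j then (1 : A) else 0)
    -- compactness : the inclusion of invariant forms is a quasi-isomorphism
    (hqis₁ : ∀ a : A, d a = 0 → ∃ y : A, (∀ v : hh, L v y = 0) ∧ ∃ z, a - y = d z)
    (hqis₂ : ∀ y : A, (∀ v : hh, L v y = 0) → d y = 0 → (∃ z, y = d z) →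
      ∃ z, (∀ v : hh, L v z = 0) ∧ d z = y)
    -- orientability : the top de Rham cohomology of `M` does not vanish
    (hor : ∃ α ∈ 𝒜 (n + k), ∀ γ : A, α ≠ d γ) :
    let wedge : A := (List.ofFn w).prod
    let Basic : A → Prop := fun x => ∀ v : hh, ι v x = 0 ∧ L v x = 0
    -- surjectivity of `H^n_B(M) → H^{n+k}(M)`, `β ↦ β ∧ w₁ ∧ ⋯ ∧ w_k`
    ((∀ α ∈ 𝒜 (n + k), ∃ β ∈ 𝒜 n, Basic β ∧ d β = 0 ∧ ∃ γ, α - β * wedge = d γ) ∧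
    -- injectivity
    (∀ β ∈ 𝒜 n, Basic β → d β = 0 → (∃ γ, β * wedge = d γ) →
      ∃ δ : A, Basic δ ∧ d δ = β) ∧
    -- in particular the foliation is homologically oriented : `H^n_B(M) ≠ 0`
    (∃ β ∈ 𝒜 n, Basic β ∧ d β = 0 ∧ ∀ δ : A, Basic δ → d δ ≠ β)) := by
  classical
  intro wedge Basic
  have hwedge : wedge = (List.ofFn w).prod := rfl
  have hBasic : ∀ x : A, Basic x = ∀ v : hh, ι v x = 0 ∧ L v x = 0 := fun _ => rfl
  -- ### pointwise operator identities
  have hcart : ∀ (v : hh) (x : A), L v x = d (ι v x) + ι v (d x) := by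
    intro v x
    have := congrArg (fun (T : Module.End ℝ A) => T x) (hcartan v)
    simpa using this
  have hdd : ∀ x : A, d (d x) = 0 := by
    intro x
    have := congrArg (fun (T : A →ₗ[ℝ] A) => T x) hd2
    simpa using this
  have hι2' : ∀ (v : hh) (x : A), ι v (ι v x) = 0 := by
    intro v x
    have := congrArg (fun (T : Module.End ℝ A) => T x) (hι2 v)
    simpa using this
  have hιL' : ∀ (v u : hh) (x : A), ι v (L u x) = L u (ι v x) := by
    intro v u x
    have := congrArg (fun (T : Module.End ℝ A) => T x) (hιL v u)
    simpa using this
  have hdι : ∀ (v : hh) (x : A), d (ι v x) = L v x - ι v (d x) := by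
    intro v x; rw [hcart v x]; abel
  have hLd : ∀ (v : hh) (x : A), L v (d x) = d (L v x) := by
    intro v x
    rw [hcart v (d x), hdd, map_zero, add_zero, hcart v x, map_add, hdd, zero_add]
  have hAC : ∀ (u v : hh) (x : A), ι u (ι v x) = - ι v (ι u x) := by
    intro u v x
    have h : (ι (u + v)) ((ι (u + v)) x) = 0 := by
      have := congrArg (fun (T : Module.End ℝ A) => T x) (hι2 (u + v))
      simpa using this
    rw [map_add] at h
    simp only [LinearMap.add_apply, map_add] at h
    rw [hι2' u x, hι2' v x] at h
    have h2 : ι v (ι u x) + ι u (ι v x) = 0 := by simpa using h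
    exact eq_neg_of_add_eq_zero_right h2
  -- ### degree helpers
  have hkill : ∀ {j : ℕ}, n + k < j → ∀ x ∈ 𝒜 j, x = (0 : A) := by
    intro j hj x hx
    rw [htop j hj] at hx
    simpa using hx
  have hmul_mem : ∀ {i j : ℕ} {x y : A}, x ∈ 𝒜 i → y ∈ 𝒜 j → x * y ∈ 𝒜 (i + j) :=
    fun hx hy => SetLike.mul_mem_graded hx hy
  have hone : (1 : A) ∈ 𝒜 0 := SetLike.GradedOne.one_mem
  have hdtop : ∀ x ∈ 𝒜 (n + k), d x = 0 := by
    intro x hx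
    exact hkill (by omega) _ (hddeg _ x hx)
  have hLdeg : ∀ (v : hh) (m : ℕ), 1 ≤ m → ∀ x ∈ 𝒜 m, L v x ∈ 𝒜 m := by
    intro v m hm x hx
    rw [hcart]
    have h1 : ι v x ∈ 𝒜 (m - 1) := hιdeg v (m - 1) x (by rwa [Nat.sub_add_cancel hm])
    have h2 : d (ι v x) ∈ 𝒜 m := by
      have := hddeg (m - 1) _ h1
      rwa [Nat.sub_add_cancel hm] at this
    exact Submodule.add_mem _ h2 (hιdeg v m _ (hddeg m x hx))
  have hι1 : ∀ v : hh, ι v (1 : A) = 0 := by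
    intro v
    have h := hιder v 0 1 hone 1
    simp only [mul_one, one_mul, pow_zero, one_smul] at h
    exact add_eq_right.mp h.symm
  -- ### projection machinery
  set π : ℕ → A → A := fun i a => ((DirectSum.decompose 𝒜 a i : 𝒜 i) : A) with hπdef
  have hπ_mem : ∀ i a, π i a ∈ 𝒜 i := fun i a => SetLike.coe_mem _
  have hπ_same : ∀ {i} {a : A}, a ∈ 𝒜 i → π i a = a := by
    intro i a h
    simp only [hπdef]
    rw [DirectSum.decompose_of_mem_same 𝒜 h]
  have hπ_ne : ∀ {i j} {a : A}, a ∈ 𝒜 i → i ≠ j → π j a = 0 := by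
    intro i j a h hij
    simp only [hπdef]
    rw [DirectSum.decompose_of_mem_ne 𝒜 h hij]
  have hπ_zero : ∀ i, π i (0 : A) = 0 := by
    intro i; exact hπ_ne (Submodule.zero_mem (𝒜 (i+1))) (by omega)
  have hπ_add : ∀ i (a b : A), π i (a + b) = π i a + π i b := by
    intro i a b
    simp only [hπdef]
    rw [DirectSum.decompose_add]
    simp
  have hπ_sub : ∀ i (a b : A), π i (a - b) = π i a - π i b := by
    intro i a b
    simp only [hπdef]
    rw [DirectSum.decompose_sub]
    simp
  have hπ_sum : ∀ i (s : Finset ℕ) (f : ℕ → A), π i (∑ j ∈ s, f j) = ∑ j ∈ s, π i (f j) := by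
    intro i s f
    induction s using Finset.induction with
    | empty => simp [hπ_zero]
    | insert _ _ hx ih => rw [Finset.sum_insert hx, Finset.sum_insert hx, hπ_add, ih]
  have hsupp : ∀ a : A, ∑ j ∈ (DirectSum.decompose 𝒜 a).support, π j a = a := by
    intro a
    exact DirectSum.sum_support_decompose 𝒜 a
  have hπ_off : ∀ (a : A) (j : ℕ), j ∉ (DirectSum.decompose 𝒜 a).support → π j a = 0 := by
    intro a j hj
    rw [DFinsupp.notMem_support_iff] at hj
    simp only [hπdef, hj]
    rfl
  -- operator commutation with projections
  have hkey : ∀ (T : A →ₗ[ℝ] A) (r : ℕ), (∀ m, ∀ x ∈ 𝒜 m, T x ∈ 𝒜 (m + r)) →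
      ∀ (a : A) (i : ℕ), π (i + r) (T a) = T (π i a) := by
    intro T r hT a i
    conv_lhs => rw [← hsupp a]
    rw [map_sum, hπ_sum]
    by_cases hi : i ∈ (DirectSum.decompose 𝒜 a).support
    · rw [Finset.sum_eq_single_of_mem i hi]
      · exact hπ_same (hT _ _ (hπ_mem _ _))
      · intro j hj hji
        exact hπ_ne (hT _ _ (hπ_mem _ _)) (by omega)
    · rw [Finset.sum_eq_zero, hπ_off a i hi, map_zero]
      intro j hj
      have hji : j ≠ i := fun e => hi (e ▸ hj)
      exact hπ_ne (hT _ _ (hπ_mem _ _)) (by omega)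
  have hkey0 : ∀ (T : A →ₗ[ℝ] A) (r : ℕ), (∀ m, ∀ x ∈ 𝒜 m, T x ∈ 𝒜 (m + r)) →
      ∀ (a : A) (j : ℕ), j < r → π j (T a) = 0 := by
    intro T r hT a j hj
    conv_lhs => rw [← hsupp a]
    rw [map_sum, hπ_sum]
    apply Finset.sum_eq_zero
    intro m hm
    exact hπ_ne (hT _ _ (hπ_mem _ _)) (by omega)
  have hπd : ∀ (a : A) (i : ℕ), π (i + 1) (d a) = d (π i a) := hkey d 1 hddeg
  have hπd0 : ∀ a : A, π 0 (d a) = 0 := fun a => hkey0 d 1 hddeg a 0 (by omega)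
  have hπmul : ∀ (a x : A) (l : ℕ), x ∈ 𝒜 l → ∀ i, π (i + l) (a * x) = π i a * x := by
    intro a x l hx i
    have := hkey (LinearMap.mulRight ℝ x) l (fun m y hy => hmul_mem hy hx) a i
    simpa using this
  -- ι on projections : π m (ι v x) = ι v (π (m+1) x) + π m (ι v (π 0 x))
  have hπι : ∀ (v : hh) (x : A) (m : ℕ),
      π m (ι v x) = ι v (π (m + 1) x) + π m (ι v (π 0 x)) := by
    intro v x m
    conv_lhs => rw [← hsupp x]
    rw [map_sum, hπ_sum]
    have hterm : ∀ j ∈ (DirectSum.decompose 𝒜 x).support, π m (ι v (π j x)) =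
        (if j = m + 1 then ι v (π (m+1) x) else 0) + (if j = 0 then π m (ι v (π 0 x)) else 0) := by
      intro j hj
      rcases Nat.eq_zero_or_pos j with h0 | hpos
      · subst h0; simp
      · have hmem : ι v (π j x) ∈ 𝒜 (j - 1) :=
          hιdeg v (j - 1) _ (by rw [Nat.sub_add_cancel hpos]; exact hπ_mem _ _)
        by_cases hje : j = m + 1
        · subst hje
          simp only [if_pos rfl, if_neg (by omega : ¬ m + 1 = 0), add_zero]
          exact hπ_same (by simpa using hmem)
        · rw [if_neg hje, if_neg (by omega), add_zero]
          exact hπ_ne hmem (by omega)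
    rw [Finset.sum_congr rfl hterm, Finset.sum_add_distrib]
    congr 1
    · rw [Finset.sum_ite_eq' _ (m+1) (fun _ => ι v (π (m+1) x))]
      split
      · rfl
      · next hns =>
        rw [hπ_off x _ hns, map_zero]
    · rw [Finset.sum_ite_eq' _ 0 (fun _ => π m (ι v (π 0 x)))]
      split
      · rfl
      · next hns =>
        rw [hπ_off x _ hns, map_zero, hπ_zero]
  -- ### partial wedges
  set Wge : ℕ → A := fun m => ((List.ofFn w).drop m).prod with hWdef
  have hW0 : wedge = Wge 0 := by simp [hwedge, hWdef]
  have hWtriv : ∀ m, k ≤ m → Wge m = 1 := by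
    intro m hm
    simp only [hWdef]
    rw [List.drop_eq_nil_of_le (by simpa using hm), List.prod_nil]
  have hWsucc : ∀ m (h : m < k), Wge m = w ⟨m, h⟩ * Wge (m + 1) := by
    intro m h
    simp only [hWdef]
    rw [List.drop_eq_getElem_cons (by simpa using h), List.prod_cons, List.getElem_ofFn]
  have hWmem : ∀ m, Wge m ∈ 𝒜 (k - m) := by
    have : ∀ t m, k ≤ m + t → Wge m ∈ 𝒜 (k - m) := by
      intro t
      induction t with
      | zero =>
        intro m hm
        rw [hWtriv m (by omega)]
        have : k - m = 0 := by omega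
        rw [this]; exact hone
      | succ t ih =>
        intro m hm
        by_cases hmk : m < k
        · rw [hWsucc m hmk]
          have := hmul_mem (hwdeg ⟨m, hmk⟩) (ih (m+1) (by omega))
          have he : 1 + (k - (m + 1)) = k - m := by omega
          rwa [he] at this
        · rw [hWtriv m (by omega)]
          have : k - m = 0 := by omega
          rw [this]; exact hone
    intro m; exact this k m (by omega)
  have hWinv : ∀ m (v : hh), L v (Wge m) = 0 := by
    have hL1 : ∀ v : hh, L v (1 : A) = 0 := by
      intro v
      have h := hLder v 1 1
      simp only [mul_one, one_mul] at h
      exact add_eq_right.mp h.symm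
    have : ∀ t m, k ≤ m + t → ∀ v : hh, L v (Wge m) = 0 := by
      intro t
      induction t with
      | zero => intro m hm v; rw [hWtriv m (by omega)]; exact hL1 v
      | succ t ih =>
        intro m hm v
        by_cases hmk : m < k
        · rw [hWsucc m hmk, hLder, hwinv, ih (m+1) (by omega), zero_mul, mul_zero, add_zero]
        · rw [hWtriv m (by omega)]; exact hL1 v
    intro m v; exact this k m (by omega) v
  have hWconlt : ∀ m (i : Fin k), (i : ℕ) < m → ι (b i) (Wge m) = 0 := by
    have : ∀ t m, k ≤ m + t → ∀ i : Fin k, (i : ℕ) < m → ι (b i) (Wge m) = 0 := by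
      intro t
      induction t with
      | zero => intro m hm i him; rw [hWtriv m (by omega)]; exact hι1 _
      | succ t ih =>
        intro m hm i him
        by_cases hmk : m < k
        · rw [hWsucc m hmk, hιder (b i) 1 _ (hwdeg ⟨m, hmk⟩), hpair,
            if_neg (by intro e; subst e; simp only [Fin.val_mk] at him; omega),
            ih (m+1) (by omega) i (by omega), zero_mul, mul_zero, smul_zero, add_zero]
        · rw [hWtriv m (by omega)]; exact hι1 _
    intro m i him; exact this k m (by omega) i him
  have hWconeq : ∀ m (h : m < k), ι (b ⟨m, h⟩) (Wge m) = Wge (m + 1) := by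
    intro m h
    rw [hWsucc m h, hιder (b ⟨m, h⟩) 1 _ (hwdeg ⟨m, h⟩), hpair, if_pos rfl, one_mul,
      hWconlt (m+1) ⟨m, h⟩ (by simp only [Fin.val_mk]; omega), mul_zero, smul_zero, add_zero]
  -- ### detection lemmas
  have hT : ∀ (x : A), x ∈ 𝒜 (n + k) → ∀ i : Fin k, ι (b i) x = 0 → x = 0 := by
    intro x hx i hix
    have hwx : w i * x = 0 := hkill (by omega) _ (hmul_mem (hwdeg i) hx)
    have h := hιder (b i) 1 (w i) (hwdeg i) x
    rw [hwx, map_zero, hpair, if_pos rfl, one_mul, hix, mul_zero, smul_zero, add_zero] at h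
    exact h.symm
  -- Y : low-index contractions kill elements of degree n + (k - j)
  have hY : ∀ j, j < k → ∀ s : A, s ∈ 𝒜 (n + (k - j)) →
      (∀ i : Fin k, (i : ℕ) ≤ j → ι (b i) s = 0) → s = 0 := by
    intro j
    induction j with
    | zero =>
      intro hk s hs hcon
      have : n + (k - 0) = n + k := by omega
      rw [this] at hs
      exact hT s hs ⟨0, hk⟩ (hcon ⟨0, hk⟩ (by simp only [Fin.val_mk]; omega))
    | succ j ih =>
      intro hjk s hs hcon
      set t := w ⟨j + 1, hjk⟩ * s with htdef
      have htmem : t ∈ 𝒜 (n + (k - j)) := by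
        have := hmul_mem (hwdeg ⟨j+1, hjk⟩) hs
        have he : 1 + (n + (k - (j+1))) = n + (k - j) := by omega
        rwa [he] at this
      have ht0 : t = 0 := by
        apply ih (by omega) t htmem
        intro i hij
        rw [htdef, hιder (b i) 1 _ (hwdeg ⟨j+1, hjk⟩), hpair,
          if_neg (by intro e; subst e; simp only [Fin.val_mk] at hij; omega),
          hcon i (by omega), mul_zero, smul_zero, zero_mul, add_zero]
      have h := hιder (b ⟨j+1, hjk⟩) 1 _ (hwdeg ⟨j+1, hjk⟩) s
      rw [← htdef, ht0, map_zero, hpair, if_pos rfl, one_mul,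
        hcon ⟨j+1, hjk⟩ (by simp), mul_zero, smul_zero, add_zero] at h
      exact h.symm
  -- Y' : high-index contractions kill elements of degree n + j, 1 ≤ j ≤ k
  have hY' : ∀ t j, j + t = k → 1 ≤ j → ∀ s : A, s ∈ 𝒜 (n + j) →
      (∀ i : Fin k, j - 1 ≤ (i : ℕ) → ι (b i) s = 0) → s = 0 := by
    intro t
    induction t with
    | zero =>
      intro j hj h1 s hs hcon
      have hjeq : j = k := by omega
      have hs' : s ∈ 𝒜 (n + k) := by rwa [hjeq] at hs
      have hk1 : k - 1 < k := by omega
      exact hT s hs' ⟨k - 1, hk1⟩ (hcon ⟨k - 1, hk1⟩ (by simp only [Fin.val_mk]; omega))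
    | succ t ih =>
      intro j hj h1 s hs hcon
      have hjk : j - 1 < k := by omega
      set t' := s * w ⟨j - 1, hjk⟩ with ht'def
      have ht'mem : t' ∈ 𝒜 (n + (j + 1)) := by
        have := hmul_mem hs (hwdeg ⟨j - 1, hjk⟩)
        have he : n + j + 1 = n + (j + 1) := by omega
        rwa [he] at this
      have ht'0 : t' = 0 := by
        apply ih (j + 1) (by omega) (by omega) t' ht'mem
        intro i hij
        rw [ht'def, hιder (b i) (n + j) s hs, hcon i (by omega), zero_mul, zero_add, hpair,
          if_neg (by intro e; subst e; simp only [Fin.val_mk] at hij; omega), mul_zero, smul_zero]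
      have h := hιder (b ⟨j - 1, hjk⟩) (n + j) s hs (w ⟨j - 1, hjk⟩)
      rw [← ht'def, ht'0, map_zero, hpair, if_pos rfl,
        hcon ⟨j - 1, hjk⟩ (by simp only [Fin.val_mk]; omega), zero_mul, zero_add, mul_one] at h
      have h2 : ((-1 : ℝ) ^ (n + j)) • (((-1 : ℝ) ^ (n + j)) • s) = 0 := by rw [← h, smul_zero]
      rwa [smul_smul, ← pow_add, ← two_mul, pow_mul, neg_one_sq, one_pow, one_smul] at h2
  -- contraction by arbitrary v from basis contractions
  have hBXP : ∀ x : A, (∀ i : Fin k, ι (b i) x = 0) → ∀ v : hh, ι v x = 0 := by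
    intro x hx v
    have hv := b.sum_repr v
    calc ι v x = ι (∑ i, b.repr v i • b i) x := by rw [hv]
    _ = ∑ i : Fin k, (b.repr v i) • ι (b i) x := by
        rw [map_sum, LinearMap.sum_apply]
        refine Finset.sum_congr rfl fun i _ => ?_
        rw [map_smul, LinearMap.smul_apply]
    _ = 0 := by simp [hx]
  have hBXPL : ∀ x : A, (∀ i : Fin k, L (b i) x = 0) → ∀ v : hh, L v x = 0 := by
    intro x hx v
    have hv := b.sum_repr v
    calc L v x = L (∑ i, b.repr v i • b i) x := by rw [hv]
    _ = ∑ i : Fin k, (b.repr v i) • L (b i) x := by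
        rw [map_sum, LinearMap.sum_apply]
        refine Finset.sum_congr rfl fun i _ => ?_
        rw [map_smul, LinearMap.smul_apply]
    _ = 0 := by simp [hx]
  have hsgn : ∀ (e : ℕ) (x : A), ((-1:ℝ)^e) • ((-1:ℝ)^e) • x = x := by
    intro e x
    rw [smul_smul, ← pow_add, ← two_mul, pow_mul, neg_one_sq, one_pow, one_smul]
  have hsupp0 : ∀ x : A, π 0 x = 0 → (0 : ℕ) ∉ (DirectSum.decompose 𝒜 x).support := by
    intro x h h0
    rw [DFinsupp.mem_support_iff] at h0
    exact h0 (ZeroMemClass.coe_eq_zero.mp h)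
  have hπL : ∀ (v : hh) (x : A), π 0 x = 0 → ∀ j, π j (L v x) = L v (π j x) := by
    intro v x hx0 j
    conv_lhs => rw [← hsupp x]
    rw [map_sum, hπ_sum]
    have hmemL : ∀ m ∈ (DirectSum.decompose 𝒜 x).support, L v (π m x) ∈ 𝒜 m := by
      intro m hm
      have hm1 : 1 ≤ m := by
        rcases Nat.eq_zero_or_pos m with h0 | h
        · exact absurd (h0 ▸ hm) (hsupp0 x hx0)
        · omega
      exact hLdeg v m hm1 _ (hπ_mem _ _)
    by_cases hj : j ∈ (DirectSum.decompose 𝒜 x).support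
    · rw [Finset.sum_eq_single_of_mem j hj (fun m hm hne => hπ_ne (hmemL m hm) hne)]
      exact hπ_same (hmemL j hj)
    · rw [Finset.sum_eq_zero (fun m hm => hπ_ne (hmemL m hm) (fun e => hj (by rw [← e]; exact hm))),
        hπ_off x j hj, map_zero]
  -- ### Part 1 : surjectivity
  have Hsurj : ∀ α ∈ 𝒜 (n + k), ∃ β ∈ 𝒜 n,
      (∀ v : hh, ι v β = 0 ∧ L v β = 0) ∧ d β = 0 ∧ ∃ γ, α - β * wedge = d γ := by
    intro α hα
    have hdα : d α = 0 := hdtop α hα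
    rcases Nat.eq_zero_or_pos (n + k) with hN0 | hNpos
    · -- degenerate case n = k = 0
      have hn0 : n = 0 := by omega
      have hk0 : k = 0 := by omega
      refine ⟨α, by rw [hn0]; rw [hn0, hk0] at hα; exact hα, ?_, hdα, 0, ?_⟩
      · intro v
        constructor
        · exact hBXP α (fun i => absurd i.isLt (by omega)) v
        · exact hBXPL α (fun i => absurd i.isLt (by omega)) v
      · rw [hW0, hWtriv 0 (by omega), mul_one, sub_self, map_zero]
    · obtain ⟨y, hyinv, z, hz⟩ := hqis₁ α hdα
      have hy_eq : y = α - d z := by rw [← hz]; abel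
      set y' := π (n + k) y with hy'def
      have hy'mem : y' ∈ 𝒜 (n + k) := hπ_mem _ _
      have hy'd : d y' = 0 := hdtop _ hy'mem
      have hπ0y : π 0 y = 0 := by
        rw [hy_eq, hπ_sub, hπd0, hπ_ne hα (by omega), zero_sub, neg_zero]
      have hy'inv : ∀ v : hh, L v y' = 0 := by
        intro v
        rw [hy'def, ← hπL v y hπ0y, hyinv, hπ_zero]
      have hex : α - y' = d (π (n + k - 1) z) := by
        have h1 : α - y' = π (n + k) (d z) := by
          rw [hy'def, hy_eq, hπ_sub, hπ_same hα]
          abel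
        rw [h1]
        have h2 := hπd z (n + k - 1)
        have he : n + k - 1 + 1 = n + k := by omega
        rw [he] at h2
        exact h2
      -- contraction chain
      set u : ℕ → A := fun m => Nat.rec y' (fun m prev =>
        if h : m < k then ((-1:ℝ) ^ (n + (k - 1 - m))) • ι (b ⟨k - 1 - m, by omega⟩) prev
        else prev) m with hudef
      have hu0 : u 0 = y' := rfl
      have husucc : ∀ m, u (m+1) = if h : m < k then
          ((-1:ℝ) ^ (n + (k - 1 - m))) • ι (b ⟨k - 1 - m, by omega⟩) (u m) else u m :=
        fun m => rfl
      have hmain : ∀ m, m ≤ k → (u m ∈ 𝒜 (n + (k - m)) ∧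
          (∀ i : Fin k, k - m ≤ (i : ℕ) → ι (b i) (u m) = 0) ∧
          (∀ v : hh, L v (u m) = 0) ∧ d (u m) = 0 ∧ y' = u m * Wge (k - m)) := by
        intro m
        induction m with
        | zero =>
          intro _
          refine ⟨by rw [Nat.sub_zero]; exact hy'mem, ?_, hy'inv, hy'd, ?_⟩
          · intro i hi
            exact absurd i.isLt (by omega)
          · rw [Nat.sub_zero, hWtriv k (le_refl k), mul_one]
            exact hu0.symm
        | succ m ih =>
          intro hm1
          obtain ⟨hmem, hcon, hinv, hdm, hrec⟩ := ih (by omega)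
          have hmk : m < k := by omega
          have hjk : k - 1 - m < k := by omega
          have hkm : k - m = (k - 1 - m) + 1 := by omega
          set j := k - 1 - m with hjdef
          have hiu : ι (b ⟨j, hjk⟩) (u m) ∈ 𝒜 (n + j) := by
            apply hιdeg
            have he : n + j + 1 = n + (k - m) := by omega
            rw [he]; exact hmem
          have hueq : u (m+1) = ((-1:ℝ) ^ (n + j)) • ι (b ⟨j, hjk⟩) (u m) := by
            rw [husucc m, dif_pos hmk]
          have humem' : u (m+1) ∈ 𝒜 (n + j) := by
            rw [hueq]; exact Submodule.smul_mem _ _ hiu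
          have humem : u (m+1) ∈ 𝒜 (n + (k - (m+1))) := by
            have he : n + (k - (m+1)) = n + j := by omega
            rw [he]; exact humem'
          have hucon : ∀ i : Fin k, k - (m+1) ≤ (i:ℕ) → ι (b i) (u (m+1)) = 0 := by
            intro i hi
            rw [hueq, map_smul]
            by_cases he : i = (⟨j, hjk⟩ : Fin k)
            · rw [he, hι2', smul_zero]
            · have hij : j < (i : ℕ) := by
                have : ¬ (i : ℕ) = j := fun e => he (Fin.ext (by simpa using e))
                omega
              rw [hAC, hcon i (by omega), map_zero, neg_zero, smul_zero]
          have huinv : ∀ v, L v (u (m+1)) = 0 := by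
            intro v
            rw [hueq, map_smul, ← hιL' (b ⟨j, hjk⟩) v (u m), hinv, map_zero, smul_zero]
          have hud : d (u (m+1)) = 0 := by
            rw [hueq, map_smul, hdι, hinv, hdm, map_zero, sub_zero, smul_zero]
          have hur : y' = u (m+1) * Wge (k - (m+1)) := by
            have hr0 : u m - u (m+1) * w ⟨j, hjk⟩ = 0 := by
              have hrmem : u m - u (m+1) * w ⟨j, hjk⟩ ∈ 𝒜 (n + (k - m)) := by
                apply Submodule.sub_mem _ hmem
                have := hmul_mem humem' (hwdeg ⟨j, hjk⟩)
                have he : n + j + 1 = n + (k - m) := by omega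
                rwa [he] at this
              have hrcon : ∀ i : Fin k, (k - m) - 1 ≤ (i : ℕ) →
                  ι (b i) (u m - u (m+1) * w ⟨j, hjk⟩) = 0 := by
                intro i hi
                rw [map_sub, hιder (b i) (n + j) (u (m+1)) humem' (w ⟨j, hjk⟩)]
                by_cases he : i = (⟨j, hjk⟩ : Fin k)
                · rw [he, hucon ⟨j, hjk⟩ (by simp only [Fin.val_mk]; omega), zero_mul,
                    zero_add, hpair, if_pos rfl, mul_one, hueq, hsgn, sub_self]
                · have hij : j < (i : ℕ) := by
                    have : ¬ (i : ℕ) = j := fun e => he (Fin.ext (by simpa using e))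
                    omega
                  rw [hucon i (by omega), zero_mul, zero_add, hpair, if_neg
                    (by intro e; subst e; simp only [Fin.val_mk] at hij; omega),
                    mul_zero, smul_zero, hcon i (by omega), zero_sub, neg_zero]
              exact hY' m (k - m) (by omega) (by omega) _ hrmem
                (by intro i hi; exact hrcon i hi)
            rw [sub_eq_zero] at hr0
            have he2 : k - (m+1) = j := by omega
            rw [hrec, hr0, hkm, mul_assoc, ← hWsucc j hjk, he2]
          exact ⟨humem, hucon, huinv, hud, hur⟩
      obtain ⟨hm, hc, hiv, hd', hr⟩ := hmain k (le_refl k)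
      refine ⟨u k, by rw [Nat.sub_self] at hm; simpa using hm, ?_, hd', π (n + k - 1) z, ?_⟩
      · intro v
        exact ⟨hBXP _ (fun i => hc i (by omega)) v, hiv v⟩
      · rw [Nat.sub_self] at hr
        rw [hW0, ← hr]
        exact hex
  -- ### Part 2 : injectivity
  have Hinj : ∀ β ∈ 𝒜 n, (∀ v : hh, ι v β = 0 ∧ L v β = 0) → d β = 0 →
      (∃ γ, β * wedge = d γ) → ∃ δ : A, (∀ v : hh, ι v δ = 0 ∧ L v δ = 0) ∧ d δ = β := by
    intro β hβ hB hdβ hexact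
    have hβι : ∀ v, ι v β = 0 := fun v => (hB v).1
    have hβWmem : β * wedge ∈ 𝒜 (n + k) := by
      rw [hW0]
      have := hmul_mem hβ (hWmem 0)
      rwa [Nat.sub_zero] at this
    have hinvW : ∀ v : hh, L v (β * wedge) = 0 := by
      intro v
      rw [hW0, hLder, (hB v).2, zero_mul, hWinv 0 v, mul_zero, add_zero]
    obtain ⟨z, hzinv, hdz⟩ := hqis₂ (β * wedge) hinvW (hdtop _ hβWmem) hexact
    set u : ℕ → A := fun m => Nat.rec z (fun m prev =>
      if h : m < k then ι (b ⟨m, h⟩) prev else prev) m with hudef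
    have hu0 : u 0 = z := rfl
    have husucc : ∀ m, u (m+1) = if h : m < k then ι (b ⟨m, h⟩) (u m) else u m := fun m => rfl
    have hmain : ∀ m, m ≤ k → ((∀ v : hh, L v (u m) = 0) ∧
        d (u m) = ((-1:ℝ)^(m * (n+1))) • (β * Wge m) ∧
        (∀ i : Fin k, (i:ℕ) < m → ι (b i) (u m) = 0)) := by
      intro m
      induction m with
      | zero =>
        intro _
        refine ⟨hzinv, ?_, fun i hi => absurd hi (by omega)⟩
        rw [hu0, hdz, hW0]
        simp
      | succ m ih =>
        intro hm1
        obtain ⟨hinv, hdm, hcon⟩ := ih (by omega)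
        have hmk : m < k := by omega
        have hueq : u (m+1) = ι (b ⟨m, hmk⟩) (u m) := by rw [husucc m, dif_pos hmk]
        refine ⟨?_, ?_, ?_⟩
        · intro v
          rw [hueq, ← hιL' (b ⟨m, hmk⟩) v (u m), hinv v, map_zero]
        · have hιW := hιder (b ⟨m, hmk⟩) n β hβ (Wge m)
          rw [hβι, zero_mul, zero_add, hWconeq m hmk] at hιW
          rw [hueq, hdι, hinv, hdm, map_smul, hιW, zero_sub, smul_smul, ← neg_smul]
          congr 1
          rw [show (m+1)*(n+1) = m*(n+1) + (n + 1) by ring, pow_add]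
          ring
        · intro i hi
          rw [hueq]
          by_cases he : i = (⟨m, hmk⟩ : Fin k)
          · rw [he, hι2']
          · have hlt : (i:ℕ) < m := by
              have : ¬ (i:ℕ) = m := fun e => he (Fin.ext (by simpa using e))
              omega
            rw [hAC, hcon i hlt, map_zero, neg_zero]
    obtain ⟨hinv, hdm, hcon⟩ := hmain k (le_refl k)
    refine ⟨((-1:ℝ)^(k*(n+1))) • u k, ?_, ?_⟩
    · intro v
      constructor
      · rw [map_smul, hBXP _ (fun i => hcon i i.isLt) v, smul_zero]
      · rw [map_smul, hinv v, smul_zero]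
    · rw [map_smul, hdm, hsgn, hWtriv k (le_refl k), mul_one]
  -- ### Part 3 : homological orientation
  have Hor : ∃ β ∈ 𝒜 n, (∀ v : hh, ι v β = 0 ∧ L v β = 0) ∧ d β = 0 ∧
      ∀ δ : A, (∀ v : hh, ι v δ = 0 ∧ L v δ = 0) → d δ ≠ β := by
    obtain ⟨α, hα, hαne⟩ := hor
    obtain ⟨β, hβ, hBβ, hdβ, γ₀, hγ₀⟩ := Hsurj α hα
    refine ⟨β, hβ, hBβ, hdβ, ?_⟩
    intro δ hBδ hdδ
    suffices hβWex : ∃ τ, β * wedge = d τ by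
      obtain ⟨τ, hτ⟩ := hβWex
      exact hαne (γ₀ + τ) (by rw [map_add, ← hτ, ← hγ₀]; abel)
    rcases Nat.eq_zero_or_pos k with hk0 | hkpos
    · refine ⟨δ, ?_⟩
      rw [hW0, hWtriv 0 (by omega), mul_one, hdδ]
    rcases Nat.eq_zero_or_pos n with hn0 | hnpos
    · have hβ0 : β = 0 := by
        have hβ0mem : β ∈ 𝒜 0 := by rw [← hn0]; exact hβ
        rw [← hπ_same hβ0mem, ← hdδ, hπd0]
      exact ⟨0, by rw [hβ0, zero_mul, map_zero]⟩
    -- main case : k ≥ 1, n ≥ 1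
    set δ'' := π (n - 1) δ with hδ''def
    set a0 := π 0 δ with ha0def
    have hδ''mem : δ'' ∈ 𝒜 (n - 1) := hπ_mem _ _
    have ha0mem : a0 ∈ 𝒜 0 := hπ_mem _ _
    have hdδ'' : d δ'' = β := by
      have h1 := hπd δ (n - 1)
      have he : n - 1 + 1 = n := by omega
      rw [he] at h1
      rw [hδ''def, ← h1, hdδ, hπ_same hβ]
    have hda0ι : ∀ u : hh, ι u (d a0) = 0 := by
      have h1 : d a0 = π 1 (d δ) := by
        have := hπd δ 0
        rw [zero_add] at this
        rw [ha0def, ← this]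
      rw [h1, hdδ]
      by_cases h : n = 1
      · rw [hπ_same (by rw [← h]; exact hβ : β ∈ 𝒜 1)]
        exact fun u => (hBβ u).1
      · rw [hπ_ne hβ (by omega)]
        exact fun u => map_zero _
    have hJX : ∀ (u : hh) (l : ℕ), 1 ≤ l → ∀ x ∈ 𝒜 l, ∀ m, (π m (ι u a0)) * x = 0 := by
      intro u l hl x hx m
      have hcx : (ι u a0) * x ∈ 𝒜 (l - 1) := by
        have h1 : ι u a0 * x = ι u (a0 * x) - a0 * ι u x := by
          have h2 := hιder u 0 a0 ha0mem x
          rw [pow_zero, one_smul] at h2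
          rw [h2]; abel
        rw [h1]
        apply Submodule.sub_mem
        · apply hιdeg u (l-1)
          have h3 := hmul_mem ha0mem hx
          rw [zero_add] at h3
          rwa [Nat.sub_add_cancel hl]
        · have h2 : ι u x ∈ 𝒜 (l-1) := hιdeg u (l-1) x (by rwa [Nat.sub_add_cancel hl])
          have h3 := hmul_mem ha0mem h2
          rwa [zero_add] at h3
      rw [← hπmul (ι u a0) x l hx m]
      exact hπ_ne hcx (by omega)
    have hJD : ∀ (u : hh) (l : ℕ), 1 ≤ l → ∀ x ∈ 𝒜 l, ∀ m, (π m (d (ι u a0))) * x = 0 := by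
      intro u l hl x hx m
      rcases Nat.eq_zero_or_pos m with hm0 | hmpos
      · rw [hm0, hπd0, zero_mul]
      · have hdcx : (d (ι u a0)) * x ∈ 𝒜 l := by
          have hc : L u a0 = d (ι u a0) + ι u (d a0) := hcart u a0
          rw [hda0ι u, add_zero] at hc
          have h1 : d (ι u a0) * x = L u (a0 * x) - a0 * L u x := by
            rw [hLder u a0 x, hc]; abel
          rw [h1]
          apply Submodule.sub_mem
          · apply hLdeg u l hl
            have h3 := hmul_mem ha0mem hx
            rwa [zero_add] at h3
          · have h3 := hmul_mem ha0mem (hLdeg u l hl x hx)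
            rwa [zero_add] at h3
        rw [← hπmul (d (ι u a0)) x l hx m]
        exact hπ_ne hdcx (by omega)
    have hcontr : ∀ i : Fin k, 2 ≤ n → ι (b i) δ'' = - π (n - 2) (ι (b i) a0) := by
      intro i hn2
      have h := hπι (b i) δ (n - 2)
      rw [(hBδ (b i)).1, hπ_zero] at h
      have he : n - 2 + 1 = n - 1 := by omega
      rw [he] at h
      exact eq_neg_of_add_eq_zero_left h.symm
    have heX : ∀ (i : Fin k) (l : ℕ), 1 ≤ l → ∀ x ∈ 𝒜 l, (ι (b i) δ'') * x = 0 := by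
      intro i l hl x hx
      rcases Nat.lt_or_ge n 2 with hn1 | hn2
      · have hδa : δ'' = a0 := by rw [hδ''def, ha0def]; congr 1; omega
        rw [hδa, ← hsupp (ι (b i) a0), Finset.sum_mul]
        exact Finset.sum_eq_zero fun m _ => hJX (b i) l hl x hx m
      · rw [hcontr i hn2, neg_mul, hJX (b i) l hl x hx (n-2), neg_zero]
    have heD : ∀ (i : Fin k) (l : ℕ), 1 ≤ l → ∀ x ∈ 𝒜 l, (d (ι (b i) δ'')) * x = 0 := by
      intro i l hl x hx
      rcases Nat.lt_or_ge n 2 with hn1 | hn2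
      · have hδa : δ'' = a0 := by rw [hδ''def, ha0def]; congr 1; omega
        rw [hδa, ← hsupp (d (ι (b i) a0)), Finset.sum_mul]
        exact Finset.sum_eq_zero fun m _ => hJD (b i) l hl x hx m
      · rw [hcontr i hn2, map_neg, neg_mul]
        have he : n - 2 + 1 = n - 1 := by omega
        have h2 := hπd (ι (b i) a0) (n - 2)
        rw [he] at h2
        rw [← h2, hJD (b i) l hl x hx (n-1), neg_zero]
    have hL'' : ∀ i : Fin k, L (b i) δ'' = d (ι (b i) δ'') := by
      intro i
      rw [hcart (b i) δ'', hdδ'', (hBβ (b i)).1, add_zero]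
    have hsn : ((-1:ℝ))^n = -((-1:ℝ))^(n-1) := by
      conv_lhs => rw [show n = (n-1)+1 by omega]
      rw [pow_succ, mul_neg_one]
    have hρ : ∀ t m, m + t = k → d (δ'' * Wge m) = β * Wge m := by
      intro t
      induction t with
      | zero =>
        intro m hm
        have hmeq : m = k := by omega
        rw [hmeq, hWtriv k (le_refl k), mul_one, mul_one, hdδ'']
      | succ t ih =>
        intro m hm
        have hmk : m < k := by omega
        have hWm1 : 1 ≤ k - m := by omega
        set ρ := d (δ'' * Wge m) - β * Wge m with hρdef
        have hρmem : ρ ∈ 𝒜 (n + (k - m)) := by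
          apply Submodule.sub_mem
          · have h1 := hmul_mem hδ''mem (hWmem m)
            have h2 := hddeg _ _ h1
            have he : n - 1 + (k - m) + 1 = n + (k - m) := by omega
            rwa [he] at h2
          · exact hmul_mem hβ (hWmem m)
        have hLterm : ∀ i : Fin k, L (b i) (δ'' * Wge m) = 0 := by
          intro i
          rw [hLder, hL'' i, hWinv m (b i), mul_zero, add_zero]
          exact heD i (k - m) hWm1 (Wge m) (hWmem m)
        have hιδW : ∀ i : Fin k, ι (b i) (δ'' * Wge m) =
            ((-1:ℝ)^(n-1)) • (δ'' * ι (b i) (Wge m)) := by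
          intro i
          rw [hιder (b i) (n-1) δ'' hδ''mem (Wge m),
            heX i (k - m) hWm1 (Wge m) (hWmem m), zero_add]
        have hιdX : ∀ i : Fin k, ι (b i) (d (δ'' * Wge m)) =
            - d (ι (b i) (δ'' * Wge m)) := by
          intro i
          have h1 := hdι (b i) (δ'' * Wge m)
          rw [hLterm i, zero_sub] at h1
          rw [h1, neg_neg]
        have hρcon : ∀ i : Fin k, (i : ℕ) ≤ m → ι (b i) ρ = 0 := by
          intro i hi
          rw [hρdef, map_sub, hιdX i, hιδW i,
            hιder (b i) n β hβ (Wge m), (hBβ (b i)).1, zero_mul, zero_add]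
          by_cases hieq : (i:ℕ) = m
          · have him : i = ⟨m, hmk⟩ := Fin.ext (by simpa using hieq)
            rw [him, hWconeq m hmk, map_smul, ih (m+1) (by omega), hsn, neg_smul]
            abel
          · have hlt : (i:ℕ) < m := by omega
            rw [hWconlt m i hlt, mul_zero, mul_zero, smul_zero, smul_zero,
              map_zero, neg_zero, sub_zero]
        have hρ0 := hY m hmk ρ hρmem hρcon
        rw [hρdef, sub_eq_zero] at hρ0
        exact hρ0
    have hfin := hρ k 0 (by omega)
    exact ⟨δ'' * Wge 0, by rw [hW0, hfin]⟩
  exact ⟨Hsurj, Hinj, Hor⟩
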